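/- Let U ⊆ {0,1,*}^d with pairwise Hamming distances in {1,...,k} (d ≥ k+1). If U contains a vector with no joker coordinates (i.e., a fully binary vector), then |U| ≤ ∑_{j=0}^{k} C(d,j). -/

import Mathlib

/-- Hamming distance between binary vectors. -/
def distB {d : ℕ} (u v : Fin d → Bool) : ℕ :=
  (Finset.univ.filter (fun i => u i ≠ v i)).card

/-- Hamming distance between vectors in {0,1,*}^d (entries `Option Bool`, `none` = joker):
counts coordinates where both entries are non-joker and differ. -/
def distS {d : ℕ} (u v : Fin d → Option Bool) : ℕ :=
  (Finset.univ.filter (fun i => ∃ a b : Bool, u i = some a ∧ v i = some b ∧ a ≠ b)).card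

/-- `v ∈ {0,1}^d` is covered by `u ∈ {0,1,*}^d` if they agree on all non-joker coordinates of `u`. -/
def covers {d : ℕ} (u : Fin d → Option Bool) (v : Fin d → Bool) : Prop :=
  ∀ i : Fin d, ∀ b : Bool, u i = some b → v i = b

/-- Number of joker (`*`) coordinates of `u`. -/
def jokers {d : ℕ} (u : Fin d → Option Bool) : ℕ :=
  (Finset.univ.filter (fun i => u i = none)).card

/-- Hamming weight of a binary vector. -/
def weight {d : ℕ} (v : Fin d → Bool) : ℕ :=
  (Finset.univ.filter (fun i => v i = true)).card
/-- If U contains a fully binary vector, then |U| ≤ ∑_{j=0}^{k} C(d,j). -/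
theorem bound_with_binary_vector (d k : ℕ) (hd : k + 1 ≤ d)
    (U : Finset (Fin d → Option Bool))
    (hU : ∀ u ∈ U, ∀ u' ∈ U, u ≠ u' → 1 ≤ distS u u' ∧ distS u u' ≤ k)
    (h0 : ∃ u ∈ U, jokers u = 0) :
    U.card ≤ ∑ j ∈ Finset.range (k + 1), d.choose j := by
  classical
  obtain ⟨u0, hu0U, hu0⟩ := h0
  -- u0 is fully binary
  have hbin : ∀ i, ∃ b : Bool, u0 i = some b := by
    intro i
    have : Finset.univ.filter (fun i => u0 i = none) = ∅ :=
      Finset.card_eq_zero.mp hu0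
    have hi : u0 i ≠ none := by
      intro h
      have : i ∈ Finset.univ.filter (fun i => u0 i = none) := by
        simp [h]
      simp_all
    exact Option.ne_none_iff_exists'.mp hi
  choose b hb using hbin
  -- the map
  set ψ : (Fin d → Option Bool) → Finset (Fin d) :=
    fun u => Finset.univ.filter (fun i => ∃ a : Bool, u i = some a ∧ a ≠ b i) with hψ
  have hcard : ∀ u ∈ U, (ψ u).card = distS u u0 := by
    intro u hu
    apply Finset.card_bij (fun i _ => i)
    · intro i hi
      simp only [hψ, Finset.mem_filter, Finset.mem_univ, true_and] at hi ⊢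
      obtain ⟨a, ha, hne⟩ := hi
      exact ⟨a, b i, ha, hb i, hne⟩
    · intro a b _ _ h; exact h
    · intro i hi
      simp only [distS, Finset.mem_filter, Finset.mem_univ, true_and] at hi
      refine ⟨i, ?_, rfl⟩
      simp only [hψ, Finset.mem_filter, Finset.mem_univ, true_and]
      obtain ⟨a, c, ha, hc, hne⟩ := hi
      refine ⟨a, ha, ?_⟩
      rw [hb i] at hc
      injection hc with hc
      rw [hc]; exact hne
  have hle : ∀ u ∈ U, (ψ u).card ≤ k := by
    intro u hu
    rw [hcard u hu]
    by_cases h : u = u0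
    · subst h
      have : distS u u = 0 := by
        simp only [distS, Finset.card_eq_zero, Finset.filter_eq_empty_iff]
        rintro i - ⟨a, c, ha, hc, hne⟩
        rw [ha] at hc; injection hc with hc; exact hne hc
      omega
    · exact (hU u hu u0 hu0U h).2
  have hinj : Set.InjOn ψ U := by
    intro u hu u' hu' heq
    by_contra hne
    obtain ⟨h1, _⟩ := hU u hu u' hu' hne
    have : (Finset.univ.filter
        (fun i => ∃ a c : Bool, u i = some a ∧ u' i = some c ∧ a ≠ c)).Nonempty := by
      rw [← Finset.card_pos]; exact h1
    obtain ⟨i, hi⟩ := this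
    simp only [Finset.mem_filter, Finset.mem_univ, true_and] at hi
    obtain ⟨a, c, ha, hc, hac⟩ := hi
    have key : (i ∈ ψ u) ↔ (i ∈ ψ u') := by rw [heq]
    simp only [hψ, Finset.mem_filter, Finset.mem_univ, true_and] at key
    by_cases hab : a = b i
    · have hcb : c ≠ b i := by rw [← hab]; exact fun h => hac h.symm
      have : ∃ a : Bool, u i = some a ∧ a ≠ b i := key.mpr ⟨c, hc, hcb⟩
      obtain ⟨a', ha', ha'b⟩ := this
      rw [ha] at ha'; injection ha' with ha'
      exact ha'b (ha' ▸ hab)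
    · have : ∃ c : Bool, u' i = some c ∧ c ≠ b i := key.mp ⟨a, ha, hab⟩
      obtain ⟨c', hc', hc'b⟩ := this
      rw [hc] at hc'; injection hc' with hc'
      subst hc'
      -- a ≠ b i, c ≠ b i, both Bool ⇒ a = c
      have : a = c := by
        cases a <;> cases c <;> cases b i <;> simp_all
      exact hac this
  -- the target set
  set T : Finset (Finset (Fin d)) :=
    Finset.univ.filter (fun s => s.card ≤ k) with hT
  have hmaps : ∀ u ∈ U, ψ u ∈ T := by
    intro u hu
    simp only [hT, Finset.mem_filter, Finset.mem_univ, true_and]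
    exact hle u hu
  have hUT : U.card ≤ T.card := Finset.card_le_card_of_injOn ψ hmaps hinj
  have hTcard : T.card = ∑ j ∈ Finset.range (k + 1), d.choose j := by
    have hsplit : T = (Finset.range (k + 1)).biUnion
        (fun j => Finset.powersetCard j (Finset.univ : Finset (Fin d))) := by
      ext s
      simp only [hT, Finset.mem_filter, Finset.mem_univ, true_and,
        Finset.mem_biUnion, Finset.mem_range, Finset.mem_powersetCard]
      constructor
      · intro h; exact ⟨s.card, by omega, Finset.subset_univ s, rfl⟩
      · rintro ⟨j, hj, -, rfl⟩; omega
    rw [hsplit, Finset.card_biUnion]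
    · apply Finset.sum_congr rfl
      intro j _
      rw [Finset.card_powersetCard, Finset.card_univ, Fintype.card_fin]
    · intro x _ y _ hxy
      apply Finset.disjoint_left.mpr
      intro s hs hs'
      rw [Finset.mem_powersetCard] at hs hs'
      exact hxy (hs.2 ▸ hs'.2 ▸ rfl)
  omega
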